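/- Let f : ℝⁿ → ℝⁿ be a quadratic vector field, h ∈ ℝ, and suppose I - (h/2) f'(x) is invertible, where f'(x) is the Jacobian of f at x. Define x' = x + h (I - (h/2) f'(x))⁻¹ f(x). Then x' satisfies the Kahan equation (x' - x)/h = 2 f((x+x')/2) - (1/2) f(x) - (1/2) f(x'). -/
import Mathlib


/-- For a quadratic vector field `f` on `ℝⁿ`, if `I - (h/2) f'(x)` is
invertible and `x' = x + h (I - (h/2) f'(x))⁻¹ f(x)` (Rosenbrock form), then `x'`
satisfies the Kahan equation `(x'-x)/h = 2 f((x+x')/2) - (1/2) f(x) - (1/2) f(x')`. -/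
theorem kahan_rosenbrock_form (n : ℕ) (f : (Fin n → ℝ) → (Fin n → ℝ))
    (Q : (Fin n → ℝ) →ₗ[ℝ] (Fin n → ℝ) →ₗ[ℝ] (Fin n → ℝ))
    (L : (Fin n → ℝ) →ₗ[ℝ] (Fin n → ℝ)) (c : Fin n → ℝ)
    (hQ : ∀ x y, Q x y = Q y x)
    (hf : ∀ x, f x = Q x x + L x + c)
    (h : ℝ) (hh : h ≠ 0) (x x' : Fin n → ℝ)
    (hinv : IsUnit ((1 : (Fin n → ℝ) →L[ℝ] (Fin n → ℝ)) - (h/2) • fderiv ℝ f x))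
    (hx' : x' = x + h • (Ring.inverse
      ((1 : (Fin n → ℝ) →L[ℝ] (Fin n → ℝ)) - (h/2) • fderiv ℝ f x)) (f x)) :
    (1/h) • (x' - x) =
      (2 : ℝ) • f ((1/2 : ℝ) • (x + x')) - (1/2 : ℝ) • f x - (1/2 : ℝ) • f x' := by
  classical
  -- continuous versions of Q and L
  let Bc : (Fin n → ℝ) →L[ℝ] (Fin n → ℝ) →L[ℝ] (Fin n → ℝ) := LinearMap.toContinuousLinearMap
    ((LinearMap.toContinuousLinearMap : ((Fin n → ℝ) →ₗ[ℝ] (Fin n → ℝ)) ≃ₗ[ℝ] ((Fin n → ℝ) →L[ℝ] (Fin n → ℝ))).toLinearMap ∘ₗ Q)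
  let Lc : (Fin n → ℝ) →L[ℝ] (Fin n → ℝ) := LinearMap.toContinuousLinearMap L
  have hBc : ∀ a b : Fin n → ℝ, Bc a b = Q a b := fun a b => rfl
  have hLc : ∀ a : Fin n → ℝ, Lc a = L a := fun a => rfl
  -- derivative of f
  have h1 : HasFDerivAt (fun y : Fin n → ℝ => Bc y y)
      ((Bc x).comp (ContinuousLinearMap.id ℝ (Fin n → ℝ)) + Bc.flip (x : Fin n → ℝ)) x :=
    Bc.hasFDerivAt.clm_apply (hasFDerivAt_id x)
  have h2 : HasFDerivAt (fun y : Fin n → ℝ => Lc y) Lc x := Lc.hasFDerivAt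
  have h3 : HasFDerivAt (fun _ : Fin n → ℝ => c) 0 x := hasFDerivAt_const (𝕜 := ℝ) c x
  have hff : f = fun y : Fin n → ℝ => Bc y y + Lc y + c := by
    funext y; simp [hf y, hBc, hLc]
  have hD : HasFDerivAt f
      ((((Bc x).comp (ContinuousLinearMap.id ℝ (Fin n → ℝ)) + Bc.flip (x : Fin n → ℝ)) + Lc) + 0) x := by
    rw [hff]; exact (h1.add h2).add h3
  have hDval : ∀ v : Fin n → ℝ, fderiv ℝ f x v = Q x v + Q v x + L v := by
    intro v
    rw [hD.fderiv]
    simp only [ContinuousLinearMap.add_apply, ContinuousLinearMap.comp_apply,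
      ContinuousLinearMap.coe_id', id_eq, ContinuousLinearMap.flip_apply,
      ContinuousLinearMap.zero_apply, hBc, hLc, add_zero]
  set z := Ring.inverse ((1 : (Fin n → ℝ) →L[ℝ] (Fin n → ℝ)) - (h/2) • fderiv ℝ f x) (f x) with hzdef
  have hAz : ((1 : (Fin n → ℝ) →L[ℝ] (Fin n → ℝ)) - (h/2) • fderiv ℝ f x) z = f x := by
    have := Ring.mul_inverse_cancel _ hinv
    calc ((1 : (Fin n → ℝ) →L[ℝ] (Fin n → ℝ)) - (h/2) • fderiv ℝ f x) z
        = (((1 : (Fin n → ℝ) →L[ℝ] (Fin n → ℝ)) - (h/2) • fderiv ℝ f x) *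
            Ring.inverse ((1 : (Fin n → ℝ) →L[ℝ] (Fin n → ℝ)) - (h/2) • fderiv ℝ f x)) (f x) := rfl
      _ = f x := by rw [this]; rfl
  have hz : z = f x + (h/2) • (Q x z + Q z x + L z) := by
    have h2' : z - (h/2) • (fderiv ℝ f x z) = f x := by
      simpa [ContinuousLinearMap.sub_apply, ContinuousLinearMap.smul_apply] using hAz
    rw [← hDval z, ← h2']; abel
  have hLHS : (1/h) • (x' - x) = z := by
    rw [hx']
    rw [add_sub_cancel_left, smul_smul, one_div_mul_cancel hh, one_smul]
  rw [hLHS, hx']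
  rw [hQ z x] at hz
  have hfx := hf x
  simp only [hf, map_add, map_smul, LinearMap.add_apply, LinearMap.smul_apply,
    smul_add, smul_smul]
  rw [hQ z x]
  nth_rewrite 1 [hz]
  rw [hfx]
  module
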